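/- Suppose F = f + Ψ attains its minimum value F* at a point x*. Let x ∈ E with R := ‖x − x*‖_L > 0, let δ = (δ_1,…,δ_n) with δ_i ≥ 0, let T be a δ-inexact update at x, and set Δ = Σ_{i=1}^n δ_i. Then: if F(x) − F* ≤ R², then H(x, T) − F* ≤ Δ + (1 − (F(x) − F*)/(2R²))·(F(x) − F*); and if F(x) − F* > R², then H(x, T) − F* ≤ Δ + R²/2 < Δ + (F(x) − F*)/2. -/

import Mathlib

open scoped RealInnerProductSpace
open MeasureTheory

noncomputable section

variable {n : ℕ} {E : Fin n → Type*} [∀ i, NormedAddCommGroup (E i)]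
  [∀ i, InnerProductSpace ℝ (E i)] [∀ i, FiniteDimensional ℝ (E i)]

/-- `U i t`: embedding of the `i`-th block into the product space `E = E₁ × ⋯ × Eₙ`
(the vector with `i`-th block equal to `t` and all other blocks zero). -/
def blockEmbed (i : Fin n) (t : E i) : PiLp 2 E :=
  (WithLp.equiv 2 (∀ j, E j)).symm (Pi.single i t)

lemma grad_convex_ineq {F : Type*} [NormedAddCommGroup F] [InnerProductSpace ℝ F] [CompleteSpace F]
    (f : F → ℝ) (hdiff : Differentiable ℝ f) (hconv : ConvexOn ℝ Set.univ f) (x y : F) :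
    f x + ⟪gradient f x, y - x⟫ ≤ f y := by
  set φ : ℝ → ℝ := fun s => f (s • (y - x) + x) with hφ
  have hφconv : ConvexOn ℝ Set.univ φ := by
    have h := hconv.comp_affineMap (AffineMap.lineMap x y)
    have he : φ = f ∘ (AffineMap.lineMap x y : ℝ →ᵃ[ℝ] F) := by
      funext s
      simp [hφ, AffineMap.lineMap_apply, vsub_eq_sub, vadd_eq_add]
    rw [he]
    simpa using h
  have hline : HasDerivAt (fun s : ℝ => s • (y - x) + x) (y - x) 0 := by
    simpa using ((hasDerivAt_id (0 : ℝ)).smul_const (y - x)).add_const x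
  have hx0 : (fun s : ℝ => s • (y - x) + x) 0 = x := by simp
  have hf' : HasFDerivAt f (fderiv ℝ f x) ((fun s : ℝ => s • (y - x) + x) 0) := by
    rw [hx0]; exact (hdiff x).hasFDerivAt
  have hφ' : HasDerivAt φ (fderiv ℝ f x (y - x)) 0 := hf'.comp_hasDerivAt 0 hline
  have hslope : fderiv ℝ f x (y - x) ≤ slope φ 0 1 :=
    hφconv.le_slope_of_hasDerivAt (Set.mem_univ 0) (Set.mem_univ 1) one_pos hφ'
  have hφ1 : φ 1 = f y := by simp [hφ]
  have hφ0 : φ 0 = f x := by simp [hφ]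
  have hs : slope φ 0 1 = f y - f x := by simp [slope, hφ1, hφ0]
  have hinner : ⟪gradient f x, y - x⟫ = fderiv ℝ f x (y - x) :=
    InnerProductSpace.toDual_symm_apply
  rw [hinner]
  linarith [hslope, hs ▸ hslope]

lemma quad_conv_bddBelow {G : Type*} [NormedAddCommGroup G] [InnerProductSpace ℝ G]
    [FiniteDimensional ℝ G] (g : G) (Lc : ℝ) (hLc : 0 < Lc) (ψ : G → ℝ)
    (hconv : ConvexOn ℝ Set.univ ψ) (hcont : Continuous ψ) (p : G) :
    BddBelow (Set.range fun t => ⟪g, t⟫ + Lc / 2 * ‖t‖ ^ 2 + ψ (p + t)) := by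
  obtain ⟨u₀, hu₀, hmax'⟩ := (isCompact_closedBall p 1).exists_isMaxOn
    ⟨p, by simp⟩ (hcont.abs.continuousOn)
  have hmax : ∀ u ∈ Metric.closedBall p 1, |ψ u| ≤ |ψ u₀| := fun u hu => hmax' hu
  set M : ℝ := |ψ u₀| with hM
  clear_value M
  have hM0 : 0 ≤ M := hM ▸ abs_nonneg _
  have hMp : |ψ p| ≤ M := hmax p (by simp)
  have hψlow : ∀ t : G, -(2 * M * (1 + ‖t‖)) ≤ ψ (p + t) := by
    intro t
    rcases le_or_gt ‖t‖ 1 with h1 | h1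
    · have hmem : p + t ∈ Metric.closedBall p 1 := by
        simpa [dist_eq_norm] using h1
      have := hmax _ hmem
      have := neg_abs_le (ψ (p + t))
      nlinarith [norm_nonneg t]
    · set s : ℝ := ‖t‖ with hs
      have hs0 : 0 < s := lt_trans one_pos h1
      have hs1 : s * s⁻¹ = 1 := mul_inv_cancel₀ hs0.ne'
      have hmem : p + s⁻¹ • t ∈ Metric.closedBall p 1 := by
        have : ‖s⁻¹ • t‖ = 1 := by
          rw [norm_smul, Real.norm_eq_abs, abs_of_pos (inv_pos.2 hs0)]
          field_simp
          exact hs.symm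
        simp [dist_eq_norm, this]
      have hu : |ψ (p + s⁻¹ • t)| ≤ M := hmax _ hmem
      have hcomb : p + s⁻¹ • t = (1 - s⁻¹) • p + s⁻¹ • (p + t) := by
        rw [sub_smul, one_smul, smul_add]; abel
      have hineq : ψ (p + s⁻¹ • t) ≤ (1 - s⁻¹) * ψ p + s⁻¹ * ψ (p + t) := by
        rw [hcomb]
        have hb : (0:ℝ) ≤ s⁻¹ := (inv_pos.2 hs0).le
        have ha : (0:ℝ) ≤ 1 - s⁻¹ := by
          have : s⁻¹ ≤ 1 := by
            rw [inv_le_one_iff₀]; right; exact h1.le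
          linarith
        simpa using hconv.2 (Set.mem_univ p) (Set.mem_univ (p + t)) ha hb (by ring)
      have hnu : -M ≤ ψ (p + s⁻¹ • t) := neg_le_of_abs_le hu
      have hnp : -M ≤ ψ p ∧ ψ p ≤ M := abs_le.1 hMp
      have h3 : s * ψ (p + s⁻¹ • t) - (s - 1) * ψ p ≤ ψ (p + t) := by
        have h2 := mul_le_mul_of_nonneg_left hineq hs0.le
        have hexp : s * ((1 - s⁻¹) * ψ p + s⁻¹ * ψ (p + t))
            = (s - 1) * ψ p + ψ (p + t) := by
          field_simp
        rw [hexp] at h2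
        linarith
      nlinarith [mul_le_mul_of_nonneg_left hnu hs0.le,
        mul_le_mul_of_nonneg_left hnp.2 (by linarith : (0:ℝ) ≤ s - 1), h3, hM0, hs0.le]
  set b : ℝ := ‖g‖ + 2 * M with hb
  clear_value b
  have hb0 : 0 ≤ b := by rw [hb]; positivity
  refine ⟨-(b ^ 2 / (2 * Lc)) - 2 * M, ?_⟩
  rintro v ⟨t, rfl⟩
  have hinner : -(‖g‖ * ‖t‖) ≤ ⟪g, t⟫ := by
    have := abs_real_inner_le_norm g t
    cases' abs_le.1 this with h _
    linarith
  have hquad : b * ‖t‖ - Lc / 2 * ‖t‖ ^ 2 ≤ b ^ 2 / (2 * Lc) := by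
    rw [le_div_iff₀ (by positivity)]
    nlinarith [sq_nonneg (Lc * ‖t‖ - b)]
  have := hψlow t
  have hn : 0 ≤ ‖t‖ := norm_nonneg t
  simp only
  nlinarith


/-- `V_i(x,t) = ⟨∇_i f(x), t⟩ + (L_i/2)‖t‖² + Ψ_i(x_i + t)`. -/
def Vi (f : PiLp 2 E → ℝ) (L : Fin n → ℝ) (Ψ : ∀ i, E i → ℝ)
    (x : PiLp 2 E) (i : Fin n) (t : E i) : ℝ :=
  ⟪(gradient f x) i, t⟫ + L i / 2 * ‖t‖ ^ 2 + Ψ i (x i + t)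

/-- `T` is a `δ`-inexact update at `x`:
`V_i(x, T_i) ≤ min{V_i(x,0), δ_i + inf_t V_i(x,t)}` for every block `i`. -/
def IsInexactUpdate (f : PiLp 2 E → ℝ) (L : Fin n → ℝ) (Ψ : ∀ i, E i → ℝ)
    (δ : Fin n → ℝ) (x T : PiLp 2 E) : Prop :=
  ∀ i, Vi f L Ψ x i (T i) ≤ min (Vi f L Ψ x i 0) (δ i + ⨅ t : E i, Vi f L Ψ x i t)

/-- `H(x,T) = f(x) + ⟨∇f(x), T⟩ + (1/2)‖T‖_L² + Ψ(x+T)`. -/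
def Hfun (f : PiLp 2 E → ℝ) (L : Fin n → ℝ) (Ψ : ∀ i, E i → ℝ) (x T : PiLp 2 E) : ℝ :=
  f x + ⟪gradient f x, T⟫ + (1/2) * ∑ i, L i * ‖T i‖ ^ 2 + ∑ i, Ψ i (x i + T i)

/-- `F = f + Ψ` where `Ψ(x) = Σ_i Ψ_i(x_i)`. -/
def Ffun (f : PiLp 2 E → ℝ) (Ψ : ∀ i, E i → ℝ) (x : PiLp 2 E) : ℝ :=
  f x + ∑ i, Ψ i (x i)

/-- Lemma 4 of the paper: with `R² = ‖x − x*‖_L² > 0` and `Δ = Σ_i δ_i`,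
if `F(x) − F* ≤ R²` then `H(x,T) − F* ≤ Δ + (1 − (F(x)−F*)/(2R²))(F(x)−F*)`, and
if `F(x) − F* > R²` then `H(x,T) − F* ≤ Δ + R²/2 < Δ + (F(x)−F*)/2`. -/
theorem Hfun_residual_bound
    (hn : 0 < n)
    (L : Fin n → ℝ) (hL : ∀ i, 0 < L i)
    (f : PiLp 2 E → ℝ) (hfdiff : Differentiable ℝ f) (hfconv : ConvexOn ℝ Set.univ f)
    (hLip : ∀ (x : PiLp 2 E) (i : Fin n) (t : E i),
      ‖(gradient f (x + blockEmbed i t)) i - (gradient f x) i‖ ≤ L i * ‖t‖)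
    (Ψ : ∀ i, E i → ℝ) (hΨconv : ∀ i, ConvexOn ℝ Set.univ (Ψ i))
    (hΨcont : ∀ i, Continuous (Ψ i))
    (Fstar : ℝ) (xstar : PiLp 2 E) (hstar : Ffun f Ψ xstar = Fstar)
    (hmin : ∀ y, Fstar ≤ Ffun f Ψ y)
    (x : PiLp 2 E) (R2 : ℝ) (hR2 : R2 = ∑ i, L i * ‖x i - xstar i‖ ^ 2) (hR2pos : 0 < R2)
    (δ : Fin n → ℝ) (hδ : ∀ i, 0 ≤ δ i)
    (T : PiLp 2 E) (hT : IsInexactUpdate f L Ψ δ x T) :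
    (Ffun f Ψ x - Fstar ≤ R2 →
      Hfun f L Ψ x T - Fstar ≤
        (∑ i, δ i) + (1 - (Ffun f Ψ x - Fstar) / (2 * R2)) * (Ffun f Ψ x - Fstar)) ∧
    (R2 < Ffun f Ψ x - Fstar →
      Hfun f L Ψ x T - Fstar ≤ (∑ i, δ i) + R2 / 2 ∧
        (∑ i, δ i) + R2 / 2 < (∑ i, δ i) + (Ffun f Ψ x - Fstar) / 2) := by
    classical
  have hG0 : 0 ≤ Ffun f Ψ x - Fstar := by linarith [hmin x]
  haveI : CompleteSpace (PiLp 2 E) := by infer_instance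
  have hkey : ∀ α : ℝ, 0 ≤ α → α ≤ 1 →
      Hfun f L Ψ x T ≤ (∑ i, δ i) +
        ((1 - α) * Ffun f Ψ x + α * Fstar + α ^ 2 / 2 * R2) := by
    intro α hα0 hα1
    set y : PiLp 2 E := x + α • (xstar - x) with hy
    have hyi : ∀ i, y i = x i + α • (xstar i - x i) := by
      intro i; simp [hy]
    have hblock : ∀ i, Vi f L Ψ x i (T i) ≤ δ i + Vi f L Ψ x i (α • (xstar i - x i)) := by
      intro i
      have hbdd : BddBelow (Set.range (Vi f L Ψ x i)) :=
        quad_conv_bddBelow ((gradient f x) i) (L i) (hL i) (Ψ i) (hΨconv i) (hΨcont i) (x i)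
      have h1 : Vi f L Ψ x i (T i) ≤ δ i + ⨅ t : E i, Vi f L Ψ x i t :=
        (hT i).trans (min_le_right _ _)
      have h2 : (⨅ t : E i, Vi f L Ψ x i t) ≤ Vi f L Ψ x i (α • (xstar i - x i)) :=
        ciInf_le hbdd _
      linarith
    have hsum : Hfun f L Ψ x T = f x + ∑ i, Vi f L Ψ x i (T i) := by
      unfold Hfun Vi
      rw [PiLp.inner_apply, Finset.sum_add_distrib, Finset.sum_add_distrib, Finset.mul_sum]
      have e : ∀ i ∈ Finset.univ, (1:ℝ)/2 * (L i * ‖T i‖ ^ 2) = L i / 2 * ‖T i‖ ^ 2 := by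
        intro i _; ring
      rw [Finset.sum_congr rfl e]
      ring
    have hsum2 : ∑ i, Vi f L Ψ x i (α • (xstar i - x i))
        = ⟪gradient f x, y - x⟫ + α ^ 2 / 2 * R2 + ∑ i, Ψ i (y i) := by
      unfold Vi
      rw [Finset.sum_add_distrib, Finset.sum_add_distrib]
      have e1 : ∑ i, ⟪(gradient f x) i, α • (xstar i - x i)⟫ = ⟪gradient f x, y - x⟫ := by
        rw [PiLp.inner_apply]
        refine Finset.sum_congr rfl fun i _ => ?_
        congr 1
        simp [hy]
      have e2 : ∑ i, L i / 2 * ‖α • (xstar i - x i)‖ ^ 2 = α ^ 2 / 2 * R2 := by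
        rw [hR2, Finset.mul_sum]
        refine Finset.sum_congr rfl fun i _ => ?_
        rw [norm_smul, Real.norm_eq_abs, mul_pow, sq_abs, norm_sub_rev (xstar i) (x i)]
        ring
      have e3 : ∀ i ∈ Finset.univ, Ψ i (x i + α • (xstar i - x i)) = Ψ i (y i) := by
        intro i _; rw [hyi i]
      rw [e1, e2, Finset.sum_congr rfl e3]
    have hgrad : f x + ⟪gradient f x, y - x⟫ ≤ f y :=
      grad_convex_ineq f hfdiff hfconv x y
    have hfy : f y ≤ (1 - α) * f x + α * f xstar := by
      have hyc : y = (1 - α) • x + α • xstar := by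
        rw [hy]; module
      rw [hyc]
      simpa using hfconv.2 (Set.mem_univ x) (Set.mem_univ xstar) (by linarith) hα0 (by ring)
    have hΨy : ∑ i, Ψ i (y i) ≤ (1 - α) * (∑ i, Ψ i (x i)) + α * ∑ i, Ψ i (xstar i) := by
      rw [Finset.mul_sum, Finset.mul_sum, ← Finset.sum_add_distrib]
      refine Finset.sum_le_sum fun i _ => ?_
      have hyc : y i = (1 - α) • x i + α • xstar i := by
        rw [hyi i]; module
      rw [hyc]
      simpa using (hΨconv i).2 (Set.mem_univ (x i)) (Set.mem_univ (xstar i))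
        (by linarith) hα0 (by ring)
    have hFy : f y + ∑ i, Ψ i (y i) ≤ (1 - α) * Ffun f Ψ x + α * Fstar := by
      have hFx : Ffun f Ψ x = f x + ∑ i, Ψ i (x i) := rfl
      have hFs : f xstar + ∑ i, Ψ i (xstar i) = Fstar := hstar
      calc f y + ∑ i, Ψ i (y i)
          ≤ ((1 - α) * f x + α * f xstar) +
            ((1 - α) * (∑ i, Ψ i (x i)) + α * ∑ i, Ψ i (xstar i)) := add_le_add hfy hΨy
        _ = (1 - α) * (f x + ∑ i, Ψ i (x i)) + α * (f xstar + ∑ i, Ψ i (xstar i)) := by ring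
        _ = (1 - α) * Ffun f Ψ x + α * Fstar := by rw [hFx, hFs]
    calc Hfun f L Ψ x T = f x + ∑ i, Vi f L Ψ x i (T i) := hsum
      _ ≤ f x + ∑ i, (δ i + Vi f L Ψ x i (α • (xstar i - x i))) :=
          add_le_add_right (Finset.sum_le_sum fun i _ => hblock i) _
      _ = (∑ i, δ i) + (f x + ∑ i, Vi f L Ψ x i (α • (xstar i - x i))) := by
          rw [Finset.sum_add_distrib]; ring
      _ = (∑ i, δ i) + (f x + ⟪gradient f x, y - x⟫ + α ^ 2 / 2 * R2 + ∑ i, Ψ i (y i)) := by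
          rw [hsum2]; ring
      _ ≤ (∑ i, δ i) + ((1 - α) * Ffun f Ψ x + α * Fstar + α ^ 2 / 2 * R2) := by
          linarith
  have hR2ne : R2 ≠ 0 := ne_of_gt hR2pos
  constructor
  · intro hle
    have hα0 : 0 ≤ (Ffun f Ψ x - Fstar) / R2 := div_nonneg hG0 hR2pos.le
    have hα1 : (Ffun f Ψ x - Fstar) / R2 ≤ 1 := (div_le_one hR2pos).2 hle
    have h := hkey _ hα0 hα1
    have harith : (1 - (Ffun f Ψ x - Fstar) / R2) * Ffun f Ψ x
        + ((Ffun f Ψ x - Fstar) / R2) * Fstar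
        + ((Ffun f Ψ x - Fstar) / R2) ^ 2 / 2 * R2
        = Fstar + (1 - (Ffun f Ψ x - Fstar) / (2 * R2)) * (Ffun f Ψ x - Fstar) := by
      field_simp
      ring
    linarith [h, harith]
  · intro hlt
    have h := hkey 1 zero_le_one le_rfl
    norm_num at h
    exact ⟨by linarith, by linarith⟩
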